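/- Let γ > 0 and let F : ℝ^d → ℝ be twice differentiable with L₂-Lipschitz Hessian, and fix x ∈ ℝ^d. On a probability space let H : Ω → S^d be a random symmetric matrix with E‖∇²F(x) − H‖_op < ∞, let u : Ω → ℝ^d be a random vector such that on the event {λ_min(H) ≤ −4γ} one has ‖u‖ = 1 and ⟨u, H u⟩ ≤ −2γ, and let r be a Rademacher random variable (uniform on {−1, +1}) independent of (H, u). Define y := x + (γ/L₂)·r·u on the event {λ_min(H) ≤ −4γ} and y := x otherwise, and assume F∘y is integrable. Then E[F(x) − F(y)] ≥ (5γ³/(6L₂²))·P(λ_min(H) ≤ −4γ) − (γ²/(2L₂²))·E‖∇²F(x) − H‖_op. -/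

import Mathlib

open MeasureTheory ProbabilityTheory
open scoped RealInnerProductSpace

/-- The smallest eigenvalue of a (self-adjoint) operator on `ℝ^d`, as the infimum of the
Rayleigh quotient over the unit sphere. -/
noncomputable def lambdaMin {d : ℕ}
    (A : EuclideanSpace ℝ (Fin d) →L[ℝ] EuclideanSpace ℝ (Fin d)) : ℝ :=
  ⨅ u : {v : EuclideanSpace ℝ (Fin d) // ‖v‖ = 1}, ⟪u.1, A u.1⟫

lemma taylor1d (f f' f'' : ℝ → ℝ) (C : ℝ)
    (h1 : ∀ t, HasDerivAt f (f' t) t) (h2 : ∀ t, HasDerivAt f' (f'' t) t)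
    (hC : ∀ t ∈ Set.Icc (0:ℝ) 1, f'' t - f'' 0 ≤ C * t) :
    f 1 ≤ f 0 + f' 0 + f'' 0 / 2 + C / 6 := by
  have step1 : ∀ t ∈ Set.Icc (0:ℝ) 1, f' t ≤ f' 0 + t * f'' 0 + C * t ^ 2 / 2 := by
    set q : ℝ → ℝ := fun t => f' t - f' 0 - t * f'' 0 - C * t ^ 2 / 2 with hqdef
    have hq : ∀ s : ℝ, HasDerivAt q (f'' s - f'' 0 - C * s) s := by
      intro s
      have : HasDerivAt (fun t : ℝ => C * t ^ 2 / 2) (C * s) s := by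
        have := ((hasDerivAt_pow 2 s).const_mul C).div_const 2
        simpa using this.congr_deriv (by ring)
      exact ((((h2 s).sub_const (f' 0)).sub
        ((hasDerivAt_id s).mul_const (f'' 0))).sub this).congr_deriv (by ring)
    have hmono : AntitoneOn q (Set.Icc 0 1) := by
      apply antitoneOn_of_deriv_nonpos (convex_Icc 0 1)
      · exact fun t ht => ((hq t).continuousAt).continuousWithinAt
      · exact fun t ht => ((hq t).differentiableAt).differentiableWithinAt
      · intro t ht
        rw [(hq t).deriv]
        have ht' : t ∈ Set.Icc (0:ℝ) 1 := interior_subset ht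
        have := hC t ht'
        linarith
    intro t ht
    have := hmono (Set.left_mem_Icc.2 zero_le_one) ht ht.1
    have hq0 : q 0 = 0 := by simp [hqdef]
    rw [hq0] at this
    simp only [hqdef] at this
    nlinarith [this]
  set p : ℝ → ℝ := fun t => f t - f 0 - t * f' 0 - t ^ 2 / 2 * f'' 0 - C * t ^ 3 / 6 with hpdef
  have hp : ∀ s : ℝ, HasDerivAt p (f' s - f' 0 - s * f'' 0 - C * s ^ 2 / 2) s := by
    intro s
    have h3 : HasDerivAt (fun t : ℝ => C * t ^ 3 / 6) (C * s ^ 2 / 2) s := by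
      have := ((hasDerivAt_pow 3 s).const_mul C).div_const 6
      simpa using this.congr_deriv (by ring)
    have h4 : HasDerivAt (fun t : ℝ => t ^ 2 / 2 * f'' 0) (s * f'' 0) s := by
      have := ((hasDerivAt_pow 2 s).div_const 2).mul_const (f'' 0)
      simpa using this.congr_deriv (by ring)
    exact (((((h1 s).sub_const (f 0)).sub
      ((hasDerivAt_id s).mul_const (f' 0))).sub h4).sub h3).congr_deriv (by ring)
  have hmono : AntitoneOn p (Set.Icc 0 1) := by
    apply antitoneOn_of_deriv_nonpos (convex_Icc 0 1)
    · exact fun t ht => ((hp t).continuousAt).continuousWithinAt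
    · exact fun t ht => ((hp t).differentiableAt).differentiableWithinAt
    · intro t ht
      rw [(hp t).deriv]
      have ht' : t ∈ Set.Icc (0:ℝ) 1 := interior_subset ht
      have := step1 t ht'
      linarith
  have := hmono (Set.left_mem_Icc.2 zero_le_one) (Set.right_mem_Icc.2 zero_le_one) zero_le_one
  have hp0 : p 0 = 0 := by simp [hpdef]
  rw [hp0] at this
  simp only [hpdef] at this
  nlinarith [this]

lemma taylor2 {d : ℕ} (F : EuclideanSpace ℝ (Fin d) → ℝ)
    (gradF : EuclideanSpace ℝ (Fin d) → EuclideanSpace ℝ (Fin d))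
    (hessF : EuclideanSpace ℝ (Fin d) →
      EuclideanSpace ℝ (Fin d) →L[ℝ] EuclideanSpace ℝ (Fin d))
    (L₂ : ℝ)
    (hgrad : ∀ z, HasGradientAt F (gradF z) z)
    (hhess : ∀ z, HasFDerivAt gradF (hessF z) z)
    (hlip : ∀ z w, ‖hessF z - hessF w‖ ≤ L₂ * ‖z - w‖)
    (x s : EuclideanSpace ℝ (Fin d)) :
    F (x + s) ≤ F x + ⟪gradF x, s⟫ + ⟪s, hessF x s⟫ / 2 + L₂ * ‖s‖ ^ 3 / 6 := by
  set line : ℝ → EuclideanSpace ℝ (Fin d) := fun t => x + t • s with hline_def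
  have hline : ∀ t : ℝ, HasDerivAt line s t := by
    intro t
    exact (((hasDerivAt_id t).smul_const s).const_add x).congr_deriv (by simp)
  set f : ℝ → ℝ := fun t => F (line t) with hf_def
  set f' : ℝ → ℝ := fun t => ⟪s, gradF (line t)⟫ with hf'_def
  set f'' : ℝ → ℝ := fun t => ⟪s, hessF (line t) s⟫ with hf''_def
  have h1 : ∀ t, HasDerivAt f (f' t) t := by
    intro t
    have := ((hgrad (line t)).hasFDerivAt).comp_hasDerivAt t (hline t)
    exact this.congr_deriv (by rw [InnerProductSpace.toDual_apply_apply]; exact real_inner_comm _ _)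
  have h2 : ∀ t, HasDerivAt f' (f'' t) t := by
    intro t
    have := ((innerSL ℝ s).hasFDerivAt).comp_hasDerivAt t
      ((hhess (line t)).comp_hasDerivAt t (hline t))
    exact this.congr_deriv rfl
  have hC : ∀ t ∈ Set.Icc (0:ℝ) 1, f'' t - f'' 0 ≤ (L₂ * ‖s‖ ^ 3) * t := by
    intro t ht
    have hdiff : f'' t - f'' 0 = ⟪s, (hessF (line t) - hessF (line 0)) s⟫ := by
      simp [f'', ContinuousLinearMap.sub_apply, inner_sub_right]
    rw [hdiff]
    calc ⟪s, (hessF (line t) - hessF (line 0)) s⟫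
        ≤ ‖s‖ * ‖(hessF (line t) - hessF (line 0)) s‖ := real_inner_le_norm _ _
      _ ≤ ‖s‖ * (‖hessF (line t) - hessF (line 0)‖ * ‖s‖) := by
          gcongr; exact (hessF (line t) - hessF (line 0)).le_opNorm s
      _ ≤ ‖s‖ * ((L₂ * ‖line t - line 0‖) * ‖s‖) := by
          gcongr _ * (?_ * _)
          exact hlip (line t) (line 0)
      _ = (L₂ * ‖s‖ ^ 3) * t := by
          have : ‖line t - line 0‖ = t * ‖s‖ := by
            simp [line, norm_smul, abs_of_nonneg ht.1]
          rw [this]; ring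
  have := taylor1d f f' f'' (L₂ * ‖s‖ ^ 3) h1 h2 hC
  have h0 : line 0 = x := by simp [line]
  have h1' : line 1 = x + s := by simp [line]
  simp only [f, f', f'', h0, h1'] at this
  rw [real_inner_comm s (gradF x)]
  exact this

lemma rayleigh_bdd {d : ℕ}
    (P : EuclideanSpace ℝ (Fin d) →L[ℝ] EuclideanSpace ℝ (Fin d)) :
    BddBelow (Set.range fun v : {v : EuclideanSpace ℝ (Fin d) // ‖v‖ = 1} => ⟪v.1, P v.1⟫) := by
  refine ⟨-‖P‖, ?_⟩
  rintro _ ⟨v, rfl⟩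
  have h1 : |⟪v.1, P v.1⟫| ≤ ‖v.1‖ * ‖P v.1‖ := abs_real_inner_le_norm _ _
  have h2 : ‖P v.1‖ ≤ ‖P‖ := by
    have := P.le_opNorm v.1
    rw [v.2, mul_one] at this
    exact this
  have h3 := neg_abs_le (⟪v.1, P v.1⟫)
  rw [v.2, one_mul] at h1
  simp only [Set.mem_setOf_eq]
  linarith

lemma lambdaMin_le_add {d : ℕ} [Nonempty {v : EuclideanSpace ℝ (Fin d) // ‖v‖ = 1}]
    (M N : EuclideanSpace ℝ (Fin d) →L[ℝ] EuclideanSpace ℝ (Fin d)) :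
    lambdaMin M ≤ lambdaMin N + ‖M - N‖ := by
  have key : ∀ v : {v : EuclideanSpace ℝ (Fin d) // ‖v‖ = 1},
      lambdaMin M - ‖M - N‖ ≤ ⟪v.1, N v.1⟫ := by
    intro v
    have h1 : lambdaMin M ≤ ⟪v.1, M v.1⟫ := ciInf_le (rayleigh_bdd M) v
    have h2 : ⟪v.1, M v.1⟫ - ⟪v.1, N v.1⟫ = ⟪v.1, (M - N) v.1⟫ := by
      simp [ContinuousLinearMap.sub_apply, inner_sub_right]
    have h3 : ⟪v.1, (M - N) v.1⟫ ≤ ‖M - N‖ := by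
      have c1 : ⟪v.1, (M - N) v.1⟫ ≤ ‖v.1‖ * ‖(M - N) v.1‖ := real_inner_le_norm _ _
      have c2 : ‖(M - N) v.1‖ ≤ ‖M - N‖ := by
        have := (M - N).le_opNorm v.1
        rw [v.2, mul_one] at this
        exact this
      rw [v.2, one_mul] at c1
      linarith
    linarith
  have h : lambdaMin M - ‖M - N‖ ≤ lambdaMin N := le_ciInf key
  linarith

lemma lambdaMin_lipschitz {d : ℕ} [Nonempty {v : EuclideanSpace ℝ (Fin d) // ‖v‖ = 1}] :
    LipschitzWith 1 (lambdaMin (d := d)) := by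
  apply LipschitzWith.of_dist_le_mul
  intro M N
  rw [Real.dist_eq, dist_eq_norm, NNReal.coe_one, one_mul]
  have h1 := lambdaMin_le_add M N
  have h2 := lambdaMin_le_add N M
  rw [norm_sub_rev] at h2
  rw [abs_sub_le_iff]
  constructor <;> linarith

/-- Expected descent of the stochastic negative-curvature step:
`E[F(x) - F(y)] ≥ (5γ³/(6L₂²))·P(λ_min(H) ≤ -4γ) - (γ²/(2L₂²))·E‖∇²F(x) - H‖_op`. -/
theorem stmt_4 {d : ℕ} {Ω : Type*} [MeasurableSpace Ω]
    (μ : Measure Ω) [IsProbabilityMeasure μ]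
    (γ : ℝ) (hγ : 0 < γ)
    (F : EuclideanSpace ℝ (Fin d) → ℝ)
    (gradF : EuclideanSpace ℝ (Fin d) → EuclideanSpace ℝ (Fin d))
    (hessF : EuclideanSpace ℝ (Fin d) →
      EuclideanSpace ℝ (Fin d) →L[ℝ] EuclideanSpace ℝ (Fin d))
    (L₂ : ℝ)
    (hgrad : ∀ z, HasGradientAt F (gradF z) z)
    (hhess : ∀ z, HasFDerivAt gradF (hessF z) z)
    (hlip : ∀ z w, ‖hessF z - hessF w‖ ≤ L₂ * ‖z - w‖)
    (x : EuclideanSpace ℝ (Fin d))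
    (H : Ω → EuclideanSpace ℝ (Fin d) →L[ℝ] EuclideanSpace ℝ (Fin d))
    (hHsymm : ∀ ω v w, ⟪H ω v, w⟫ = ⟪v, H ω w⟫)
    (hH_meas : Measurable H)
    (hH_int : Integrable (fun ω => ‖hessF x - H ω‖) μ)
    (u : Ω → EuclideanSpace ℝ (Fin d)) (hu_meas : Measurable u)
    (hu : ∀ ω, lambdaMin (H ω) ≤ -4 * γ → ‖u ω‖ = 1 ∧ ⟪u ω, H ω (u ω)⟫ ≤ -2 * γ)
    (r : Ω → ℝ) (hr_meas : Measurable r)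
    (hr1 : μ {ω | r ω = 1} = 1 / 2) (hr2 : μ {ω | r ω = -1} = 1 / 2)
    (hindep : IndepFun r (fun ω => (H ω, u ω)) μ)
    (y : Ω → EuclideanSpace ℝ (Fin d))
    (hy_nc : ∀ ω, lambdaMin (H ω) ≤ -4 * γ → y ω = x + (γ / L₂ * r ω) • u ω)
    (hy_eq : ∀ ω, ¬(lambdaMin (H ω) ≤ -4 * γ) → y ω = x)
    (hFy : Integrable (fun ω => F (y ω)) μ) :
    ∫ ω, (F x - F (y ω)) ∂μ ≥
      5 * γ ^ 3 / (6 * L₂ ^ 2) * (μ {ω | lambdaMin (H ω) ≤ -4 * γ}).toReal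
      - γ ^ 2 / (2 * L₂ ^ 2) * ∫ ω, ‖hessF x - H ω‖ ∂μ := by
  rcases Nat.eq_zero_or_pos d with hd | hd
  · -- degenerate case d = 0
    subst hd
    haveI hempty : IsEmpty {v : EuclideanSpace ℝ (Fin 0) // ‖v‖ = 1} := by
      refine ⟨fun v => ?_⟩
      have h0 : v.1 = 0 := Subsingleton.elim _ _
      have := v.2
      rw [h0] at this
      simp at this
    have hlam : ∀ M : EuclideanSpace ℝ (Fin 0) →L[ℝ] EuclideanSpace ℝ (Fin 0),
        lambdaMin M = 0 := by
      intro M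
      rw [lambdaMin, Real.iInf_of_isEmpty]
    have hnc : ∀ ω, ¬ (lambdaMin (H ω) ≤ -4 * γ) := by
      intro ω
      rw [not_le, hlam (H ω)]
      linarith
    have hy : ∀ ω, y ω = x := fun ω => hy_eq ω (hnc ω)
    have hA : {ω | lambdaMin (H ω) ≤ -4 * γ} = (∅ : Set Ω) := by
      ext ω
      simp only [Set.mem_setOf_eq, Set.mem_empty_iff_false, iff_false]
      exact hnc ω
    have hnorm : ∀ ω, ‖hessF x - H ω‖ = (0:ℝ) := by
      intro ω
      have : hessF x - H ω = 0 := ContinuousLinearMap.ext fun v => Subsingleton.elim _ _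
      rw [this, norm_zero]
    have h1 : ∫ ω, (F x - F (y ω)) ∂μ = 0 := by
      have he : (fun ω => F x - F (y ω)) = fun _ => (0:ℝ) :=
        funext fun ω => by rw [hy ω, sub_self]
      rw [he, integral_zero]
    have h2 : ∫ ω, ‖hessF x - H ω‖ ∂μ = 0 := by
      have he : (fun ω => ‖hessF x - H ω‖) = fun _ => (0:ℝ) := funext fun ω => hnorm ω
      rw [he, integral_zero]
    rw [h1, h2, hA]
    simp
  · -- d ≥ 1
    haveI hne : Nonempty {v : EuclideanSpace ℝ (Fin d) // ‖v‖ = 1} := by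
      refine ⟨⟨EuclideanSpace.single ⟨0, hd⟩ (1:ℝ), ?_⟩⟩
      rw [EuclideanSpace.norm_single]
      exact norm_one
    have hL₂0 : 0 ≤ L₂ := by
      have h := hlip (EuclideanSpace.single ⟨0, hd⟩ (1:ℝ)) 0
      rw [sub_zero, EuclideanSpace.norm_single, norm_one, mul_one] at h
      exact le_trans (norm_nonneg _) h
    rcases eq_or_lt_of_le hL₂0 with hL | hL2
    · -- L₂ = 0 : everything degenerates
      have hy : ∀ ω, y ω = x := by
        intro ω
        by_cases hω : lambdaMin (H ω) ≤ -4 * γ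
        · rw [hy_nc ω hω, ← hL, div_zero, zero_mul, zero_smul, add_zero]
        · exact hy_eq ω hω
      have h1 : ∫ ω, (F x - F (y ω)) ∂μ = 0 := by
        have he : (fun ω => F x - F (y ω)) = fun _ => (0:ℝ) :=
          funext fun ω => by rw [hy ω, sub_self]
        rw [he, integral_zero]
      have hz1 : 5 * γ ^ 3 / (6 * (0:ℝ) ^ 2) = 0 := by norm_num
      have hz2 : γ ^ 2 / (2 * (0:ℝ) ^ 2) = 0 := by norm_num
      rw [← hL, h1, hz1, hz2, zero_mul, zero_mul, sub_zero]
    · -- main case L₂ > 0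
      set c : ℝ := γ / L₂ with hc
      have hcpos : 0 < c := div_pos hγ hL2
      set A : Set Ω := {ω | lambdaMin (H ω) ≤ -4 * γ} with hA
      have hcont : Continuous (lambdaMin (d := d)) := lambdaMin_lipschitz.continuous
      have hAmeas : MeasurableSet A :=
        hH_meas (hcont.measurable measurableSet_Iic)
      set ψ : ((EuclideanSpace ℝ (Fin d) →L[ℝ] EuclideanSpace ℝ (Fin d)) ×
          EuclideanSpace ℝ (Fin d)) → ℝ :=
        fun p => if lambdaMin p.1 ≤ -4 * γ then ⟪gradF x, p.2⟫ else 0 with hψ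
      have hψmeas : Measurable ψ := by
        apply Measurable.ite
        · exact (hcont.comp continuous_fst).measurable measurableSet_Iic
        · exact (Continuous.inner continuous_const continuous_snd).measurable
        · exact measurable_const
      set φ : Ω → ℝ := fun ω => ψ (H ω, u ω) with hφ
      have hφmeas : Measurable φ := hψmeas.comp (hH_meas.prodMk hu_meas)
      have hφbound : ∀ ω, |φ ω| ≤ ‖gradF x‖ := by
        intro ω
        by_cases hω : lambdaMin (H ω) ≤ -4 * γ
        · have h1 : φ ω = ⟪gradF x, u ω⟫ := if_pos hω
          rw [h1]
          have := abs_real_inner_le_norm (gradF x) (u ω)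
          rw [(hu ω hω).1, mul_one] at this
          exact this
        · have h1 : φ ω = 0 := if_neg hω
          rw [h1, abs_zero]; exact norm_nonneg _
      have hφint : Integrable φ μ := by
        refine Integrable.mono' (integrable_const ‖gradF x‖)
          hφmeas.aestronglyMeasurable ?_
        exact Filter.Eventually.of_forall fun ω => by
          rw [Real.norm_eq_abs]; exact hφbound ω
      -- a.e. r = ±1
      set B1 : Set Ω := {ω | r ω = 1} with hB1def
      set B2 : Set Ω := {ω | r ω = -1} with hB2def
      have hB1 : MeasurableSet B1 := hr_meas (measurableSet_singleton 1)
      have hB2 : MeasurableSet B2 := hr_meas (measurableSet_singleton (-1))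
      have hdisj : Disjoint B1 B2 := by
        rw [Set.disjoint_left]
        intro ω h1 h2
        simp only [hB1def, hB2def, Set.mem_setOf_eq] at h1 h2
        rw [h1] at h2; norm_num at h2
      have hG : μ (B1 ∪ B2) = 1 := by
        rw [measure_union hdisj hB2, hr1, hr2, ENNReal.add_halves]
      have hae : ∀ᵐ ω ∂μ, r ω = 1 ∨ r ω = -1 := by
        rw [ae_iff]
        have hcompl : {ω | ¬(r ω = 1 ∨ r ω = -1)} = (B1 ∪ B2)ᶜ := by
          ext ω; simp [hB1def, hB2def, not_or]
        rw [hcompl, measure_compl (hB1.union hB2) (measure_ne_top μ _), hG, measure_univ,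
          tsub_self]
      have hrint : Integrable r μ := by
        refine Integrable.mono' (integrable_const 1) hr_meas.aestronglyMeasurable ?_
        filter_upwards [hae] with ω hω
        rcases hω with h | h <;> rw [h] <;> simp
      have hEr : ∫ ω, r ω ∂μ = 0 := by
        have heq : r =ᵐ[μ] fun ω =>
            Set.indicator B1 (fun _ => (1:ℝ)) ω + Set.indicator B2 (fun _ => (-1:ℝ)) ω := by
          filter_upwards [hae] with ω hω
          rcases hω with h | h
          · have h2 : ω ∉ B2 := by
              intro hx
              have hx' : r ω = -1 := hx
              rw [h] at hx'; norm_num at hx'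
            have h1 : ω ∈ B1 := h
            rw [Set.indicator_of_mem h1, Set.indicator_of_notMem h2, h]
            ring
          · have h1 : ω ∉ B1 := by
              intro hx
              have hx' : r ω = 1 := hx
              rw [h] at hx'; norm_num at hx'
            have h2 : ω ∈ B2 := h
            rw [Set.indicator_of_notMem h1, Set.indicator_of_mem h2, h]
            ring
        rw [integral_congr_ae heq, integral_add
          ((integrable_const (1:ℝ)).indicator hB1)
          ((integrable_const (-1:ℝ)).indicator hB2),
          integral_indicator_const _ hB1, integral_indicator_const _ hB2, measureReal_def, measureReal_def, hr1, hr2]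
        norm_num
      have hindep2 : IndepFun r φ μ := hindep.comp measurable_id hψmeas
      have hrφ : ∫ ω, r ω * φ ω ∂μ = 0 := by
        have := hindep2.integral_mul_eq_mul_integral hrint.aestronglyMeasurable hφint.aestronglyMeasurable
        have h2 : ∫ ω, r ω * φ ω ∂μ = (∫ ω, r ω ∂μ) * ∫ ω, φ ω ∂μ := this
        rw [h2, hEr, zero_mul]
      set K1 : ℝ := 5 * γ ^ 3 / (6 * L₂ ^ 2) with hK1
      set K2 : ℝ := γ ^ 2 / (2 * L₂ ^ 2) with hK2
      have hK2nn : 0 ≤ K2 := by positivity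
      set g : Ω → ℝ := fun ω => -(c * (r ω * φ ω)) +
        Set.indicator A (fun ω => K1 - K2 * ‖hessF x - H ω‖) ω with hg
      have hrφint : Integrable (fun ω => r ω * φ ω) μ := by
        refine Integrable.mono' (integrable_const ‖gradF x‖)
          (hr_meas.mul hφmeas).aestronglyMeasurable ?_
        filter_upwards [hae] with ω hω
        rw [Real.norm_eq_abs, abs_mul]
        rcases hω with h | h <;> rw [h] <;> simpa using hφbound ω
      have hgint : Integrable g μ := by
        refine Integrable.add ?_ ?_
        · exact ((hrφint.const_mul c).neg)
        · exact ((integrable_const K1).sub (hH_int.const_mul K2)).indicator hAmeas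
      -- pointwise a.e. inequality
      have hptwise : ∀ᵐ ω ∂μ, g ω ≤ F x - F (y ω) := by
        filter_upwards [hae] with ω hrω
        by_cases hω : lambdaMin (H ω) ≤ -4 * γ
        · obtain ⟨hu1, hu2⟩ := hu ω hω
          have hmem : ω ∈ A := hω
          have hy' := hy_nc ω hω
          have habs : |r ω| = 1 := by rcases hrω with h | h <;> rw [h] <;> norm_num
          have hrsq : r ω ^ 2 = 1 := by rcases hrω with h | h <;> rw [h] <;> norm_num
          set s : EuclideanSpace ℝ (Fin d) := (c * r ω) • u ω with hs
          have hsnorm : ‖s‖ = c := by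
            rw [hs, norm_smul, hu1, mul_one, Real.norm_eq_abs, abs_mul, habs,
              abs_of_pos hcpos, mul_one]
          have htay := taylor2 F gradF hessF L₂ hgrad hhess hlip x s
          have hφval : φ ω = ⟪gradF x, u ω⟫ := if_pos hω
          have hgs : ⟪gradF x, s⟫ = c * (r ω * φ ω) := by
            rw [hs, real_inner_smul_right, hφval]; ring
          have hquad : ⟪s, hessF x s⟫ ≤ c ^ 2 * (-2 * γ + ‖hessF x - H ω‖) := by
            have e1 : ⟪s, hessF x s⟫ = c ^ 2 * ⟪u ω, hessF x (u ω)⟫ := by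
              rw [hs, (hessF x).map_smul, real_inner_smul_left, real_inner_smul_right]
              have : (c * r ω) * ((c * r ω) * ⟪u ω, hessF x (u ω)⟫)
                  = (c ^ 2 * r ω ^ 2) * ⟪u ω, hessF x (u ω)⟫ := by ring
              rw [this, hrsq, mul_one]
            have e2 : ⟪u ω, hessF x (u ω)⟫ ≤ -2 * γ + ‖hessF x - H ω‖ := by
              have d1 : ⟪u ω, hessF x (u ω)⟫ - ⟪u ω, H ω (u ω)⟫
                  = ⟪u ω, (hessF x - H ω) (u ω)⟫ := by
                simp [ContinuousLinearMap.sub_apply, inner_sub_right]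
              have d2 : ⟪u ω, (hessF x - H ω) (u ω)⟫ ≤ ‖hessF x - H ω‖ := by
                have c1 := real_inner_le_norm (u ω) ((hessF x - H ω) (u ω))
                have c2 := (hessF x - H ω).le_opNorm (u ω)
                rw [hu1, one_mul] at c1
                rw [hu1, mul_one] at c2
                linarith
              linarith
            rw [e1]
            have := mul_le_mul_of_nonneg_left e2 (sq_nonneg c)
            linarith
          have hind : Set.indicator A (fun ω => K1 - K2 * ‖hessF x - H ω‖) ω
              = K1 - K2 * ‖hessF x - H ω‖ := Set.indicator_of_mem hmem _
          rw [hsnorm] at htay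
          set NN : ℝ := ‖hessF x - H ω‖ with hNN
          have key : -(c ^ 2 * (-2 * γ + NN)) / 2 - L₂ * c ^ 3 / 6 = K1 - K2 * NN := by
            rw [hc, hK1, hK2]
            field_simp
            ring
          simp only [hg]
          rw [hy', hind, ← hgs]
          linarith [htay, hquad, key]
        · have hy' := hy_eq ω hω
          have hnmem : ω ∉ A := hω
          have hφ0 : φ ω = 0 := if_neg hω
          have hind0 : Set.indicator A (fun ω => K1 - K2 * ‖hessF x - H ω‖) ω = 0 :=
            Set.indicator_of_notMem hnmem _
          simp only [hg]
          rw [hy', hind0, hφ0]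
          simp
      have hmain : ∫ ω, g ω ∂μ ≤ ∫ ω, (F x - F (y ω)) ∂μ :=
        integral_mono_ae hgint ((integrable_const (F x)).sub hFy) hptwise
      have hgeval : ∫ ω, g ω ∂μ
          = K1 * (μ A).toReal - K2 * ∫ ω in A, ‖hessF x - H ω‖ ∂μ := by
        have hint1 : Integrable (fun ω => -(c * (r ω * φ ω))) μ :=
          (hrφint.const_mul c).neg
        have hint2 : Integrable
            (fun ω => Set.indicator A (fun ω' => K1 - K2 * ‖hessF x - H ω'‖) ω) μ :=
          ((integrable_const K1).sub (hH_int.const_mul K2)).indicator hAmeas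
        have e1 : ∫ ω, -(c * (r ω * φ ω)) ∂μ = 0 := by
          rw [integral_neg, integral_const_mul, hrφ, mul_zero, neg_zero]
        have e2 : ∫ ω, Set.indicator A (fun ω' => K1 - K2 * ‖hessF x - H ω'‖) ω ∂μ
            = K1 * (μ A).toReal - K2 * ∫ ω in A, ‖hessF x - H ω‖ ∂μ := by
          rw [integral_indicator hAmeas]
          have i1 : IntegrableOn (fun _ : Ω => K1) A μ :=
            integrableOn_const (measure_ne_top μ A)
          have i2 : IntegrableOn (fun ω => K2 * ‖hessF x - H ω‖) A μ :=
            (hH_int.const_mul K2).integrableOn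
          rw [integral_sub i1 i2, setIntegral_const, integral_const_mul, smul_eq_mul, measureReal_def,
            mul_comm ((μ A).toReal) K1]
        calc ∫ ω, g ω ∂μ
            = (∫ ω, -(c * (r ω * φ ω)) ∂μ)
              + ∫ ω, Set.indicator A (fun ω' => K1 - K2 * ‖hessF x - H ω'‖) ω ∂μ := by
              simp only [hg]
              exact integral_add hint1 hint2
          _ = K1 * (μ A).toReal - K2 * ∫ ω in A, ‖hessF x - H ω‖ ∂μ := by
              rw [e1, e2, zero_add]
      have hsub : ∫ ω in A, ‖hessF x - H ω‖ ∂μ ≤ ∫ ω, ‖hessF x - H ω‖ ∂μ :=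
        setIntegral_le_integral hH_int
          (Filter.Eventually.of_forall fun ω => norm_nonneg _)
      have hfinal : K1 * (μ A).toReal - K2 * ∫ ω, ‖hessF x - H ω‖ ∂μ
          ≤ ∫ ω, (F x - F (y ω)) ∂μ := by
        have h1 : K2 * ∫ ω in A, ‖hessF x - H ω‖ ∂μ
            ≤ K2 * ∫ ω, ‖hessF x - H ω‖ ∂μ := mul_le_mul_of_nonneg_left hsub hK2nn
        linarith [hmain, hgeval.ge, hgeval.le]
      exact hfinal
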